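/- If $\A_e$ is commutative for every idempotent $e$ of an inverse semigroup $S$, then for all idempotents $e,f$ and all $a\in\A_e$, $b\in\A_f$ one has $ab=ba$. -/

import Mathlib

/-- An inverse semigroup: a semigroup with an involution `star` such that `s (star s) s = s`,
`(star s) s (star s) = star s`, and idempotents commute (this forces `star s` to be the
unique generalized inverse of `s`). -/
class InverseSemigroup (S : Type*) extends Semigroup S, Star S where
  mul_star_mul : ∀ s : S, s * star s * s = s
  star_mul_star : ∀ s : S, star s * s * star s = star s
  idem_comm : ∀ e f : S, e * e = e → f * f = f → e * f = f * e

/-- The natural partial order on an inverse semigroup: `s ≤ t` iff `s = t (star s) s`. -/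
def ISle {S : Type*} [InverseSemigroup S] (s t : S) : Prop := t * (star s * s) = s

/-- A (concrete) Fell bundle over an inverse semigroup `S`: a family of closed subspaces
`fib s` of a C*-algebra `A`, with `fib s * fib t ⊆ fib (s t)`, `(fib s)* ⊆ fib (star s)`,
and `fib s ⊆ fib t` whenever `s ≤ t`.  (The fibers are thus Banach spaces with a
bilinear associative multiplication `𝒜ₛ × 𝒜ₜ → 𝒜ₛₜ`, a conjugate-linear involution
`𝒜ₛ → 𝒜ₛ*`, isometric inclusions, and the C*-identities hold in `A`.) -/
structure FellBundle (S : Type*) [InverseSemigroup S] (A : Type*)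
    [NormedRing A] [StarRing A] [NormedAlgebra ℂ A] where
  fib : S → Submodule ℂ A
  isClosed_fib : ∀ s, IsClosed (fib s : Set A)
  mul_mem : ∀ {s t : S} {a b : A}, a ∈ fib s → b ∈ fib t → a * b ∈ fib (s * t)
  star_mem : ∀ {s : S} {a : A}, a ∈ fib s → star a ∈ fib (star s)
  incl : ∀ {s t : S}, ISle s t → fib s ≤ fib t

variable {S : Type*} [InverseSemigroup S]
variable {A : Type*} [NormedRing A] [StarRing A] [CStarRing A]
  [NormedAlgebra ℂ A] [StarModule ℂ A] [CompleteSpace A]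

/-- A Fell bundle is semi-abelian if each fiber over an idempotent is commutative. -/
def FellBundle.SemiAbelian (𝓑 : FellBundle S A) : Prop :=
  ∀ e : S, e * e = e → ∀ a b : A, a ∈ 𝓑.fib e → b ∈ 𝓑.fib e → a * b = b * a

/-- A Fell bundle is saturated if `fib (s t)` is the closed linear span of
`fib s * fib t`. -/
def FellBundle.Saturated (𝓑 : FellBundle S A) : Prop :=
  ∀ s t : S, (𝓑.fib (s * t) : Set A) ⊆
    closure (↑(Submodule.span ℂ {x : A | ∃ a ∈ 𝓑.fib s, ∃ b ∈ 𝓑.fib t, x = a * b}) : Set A)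

/-- The "restriction to the idempotent semilattice" part of the bundle: the closed linear
span of the fibers over idempotents, a concrete model for `C*(𝓔)`. -/
def FellBundle.EPart (𝓑 : FellBundle S A) : Set A :=
  closure (↑(Submodule.span ℂ (⋃ e ∈ {e : S | e * e = e}, (𝓑.fib e : Set A))) : Set A)

/-- The open support `𝒰ₑ ⊆ X` of the ideal `𝒜ₑ = C₀(𝒰ₑ)`, expressed via the Gelfand
transform `val` of the idempotent part. -/
def FellBundle.U (𝓑 : FellBundle S A) {X : Type*} (val : A → X → ℂ) (e : S) : Set X :=
  {x : X | ∃ b ∈ 𝓑.fib e, val b x ≠ 0}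

section AuxStmt6

open scoped ContinuousMapZero

lemma InverseSemigroup.star_idem {S : Type*} [InverseSemigroup S] {e : S} (he : e * e = e) :
    star e = e := by
  have hx1 : e * star e * e = e := InverseSemigroup.mul_star_mul e
  have hx2 : star e * e * star e = star e := InverseSemigroup.star_mul_star e
  set x := star e with hxdef
  have hp : (e * x) * (e * x) = e * x := by
    calc (e * x) * (e * x) = e * (x * e * x) := by simp only [mul_assoc]
    _ = e * x := by rw [hx2]
  have hq : (x * e) * (x * e) = x * e := by
    calc (x * e) * (x * e) = x * (e * x * e) := by simp only [mul_assoc]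
    _ = x * e := by rw [hx1]
  have hcp := InverseSemigroup.idem_comm e (e * x) he hp
  have hcq := InverseSemigroup.idem_comm e (x * e) he hq
  have h1 : e * (e * x) = e * x := by rw [← mul_assoc, he]
  have hpe : e * x = e := by rw [← h1, hcp]; exact hx1
  have h4 : (x * e) * e = x * e := by rw [mul_assoc, he]
  have hqe : x * e = e := by rw [← h4, ← hcq, ← mul_assoc]; exact hx1
  calc x = x * e * x := hx2.symm
  _ = e * x := by rw [hqe]
  _ = e := hpe

lemma cfcₙ_mem_of_closed' {A : Type*} [CStarAlgebra A] (N : Submodule ℂ A)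
    (hN : IsClosed (N : Set A))
    (hmul : ∀ {x y : A}, x ∈ N → y ∈ N → x * y ∈ N)
    (hstar : ∀ {x : A}, x ∈ N → star x ∈ N)
    {x : A} (hx : x ∈ N) (hsa : IsSelfAdjoint x)
    (f : ℝ → ℝ) (hf : Continuous f) (hf0 : f 0 = 0) :
    cfcₙ f x ∈ N := by
  suffices H : ∀ g : ContinuousMapZero (quasispectrum ℝ x) ℝ, cfcₙHom hsa g ∈ N by
    rw [cfcₙ_apply f x hf.continuousOn hf0 hsa]; exact H _
  intro g
  have h0 : ((0 : quasispectrum ℝ x) : ℝ) = 0 := rfl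
  induction g using ContinuousMapZero.induction_on_of_compact with
  | zero => rw [map_zero]; exact N.zero_mem
  | id =>
      have hid : cfcₙHom hsa (ContinuousMapZero.id (quasispectrum ℝ x)) = x := cfcₙHom_id hsa
      rw [hid]; exact hx
  | star_id =>
      have hid : cfcₙHom hsa (ContinuousMapZero.id (quasispectrum ℝ x)) = x := cfcₙHom_id hsa
      rw [map_star, hid]; exact hstar hx
  | add f g hf hg => rw [map_add]; exact N.add_mem hf hg
  | mul f g hf hg => rw [map_mul]; exact hmul hf hg
  | smul r g hg => rw [map_smul]; exact N.smul_of_tower_mem r hg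
  | frequently g hg =>
      exact hN.mem_of_frequently_of_tendsto hg
        ((cfcₙHom_isClosedEmbedding hsa).continuous.tendsto g)

lemma sqrt_decomp' {A : Type*} [CStarAlgebra A] {x : A} (hsa : IsSelfAdjoint x) :
    cfcₙ (fun t : ℝ => Real.sqrt (max t 0)) x * cfcₙ (fun t : ℝ => Real.sqrt (max t 0)) x
      - cfcₙ (fun t : ℝ => Real.sqrt (max (-t) 0)) x
          * cfcₙ (fun t : ℝ => Real.sqrt (max (-t) 0)) x
      = x := by
  set g1 : ℝ → ℝ := fun t => Real.sqrt (max t 0) with hg1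
  set g2 : ℝ → ℝ := fun t => Real.sqrt (max (-t) 0) with hg2
  have c1 : Continuous g1 := Real.continuous_sqrt.comp (continuous_id.max continuous_const)
  have c2 : Continuous g2 := Real.continuous_sqrt.comp (continuous_neg.max continuous_const)
  have z1 : g1 0 = 0 := by simp [hg1]
  have z2 : g2 0 = 0 := by simp [hg2]
  calc cfcₙ g1 x * cfcₙ g1 x - cfcₙ g2 x * cfcₙ g2 x
      = cfcₙ (fun t => g1 t * g1 t) x - cfcₙ (fun t => g2 t * g2 t) x := by
        rw [cfcₙ_mul g1 g1 x c1.continuousOn z1 c1.continuousOn z1,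
            cfcₙ_mul g2 g2 x c2.continuousOn z2 c2.continuousOn z2]
  _ = cfcₙ (fun t => g1 t * g1 t - g2 t * g2 t) x :=
        (cfcₙ_sub _ _ x (c1.mul c1).continuousOn (by simp [z1])
          (c2.mul c2).continuousOn (by simp [z2])).symm
  _ = cfcₙ (fun t : ℝ => t) x := by
        apply cfcₙ_congr
        intro t _
        show g1 t * g1 t - g2 t * g2 t = t
        simp only [hg1, hg2]
        rw [Real.mul_self_sqrt (le_max_right _ _), Real.mul_self_sqrt (le_max_right _ _)]
        rcases le_total 0 t with ht | ht
        · rw [max_eq_left ht, max_eq_right (by linarith)]; ring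
        · rw [max_eq_right ht, max_eq_left (by linarith)]; ring
  _ = x := cfcₙ_id' ℝ x hsa

end AuxStmt6

/-- If the fiber `𝒜ₑ` is commutative for every idempotent `e` of the
inverse semigroup `S`, then for all idempotents `e, f` and all `a ∈ 𝒜ₑ`, `b ∈ 𝒜_f` one
has `a b = b a`. -/
theorem stmt_6 (𝓑 : FellBundle S A)
    (h : ∀ e : S, e * e = e → ∀ a b : A, a ∈ 𝓑.fib e → b ∈ 𝓑.fib e → a * b = b * a)
    {e f : S} (he : e * e = e) (hf : f * f = f) {a b : A}
    (ha : a ∈ 𝓑.fib e) (hb : b ∈ 𝓑.fib f) :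
    a * b = b * a := by
  letI : CStarAlgebra A :=
    { ‹NormedRing A›, ‹StarRing A›, ‹CStarRing A›, ‹NormedAlgebra ℂ A›,
      ‹StarModule ℂ A›, ‹CompleteSpace A› with }
  have hcomm : e * f = f * e := InverseSemigroup.idem_comm e f he hf
  have hef : (e * f) * (e * f) = e * f := by
    calc (e * f) * (e * f) = e * (f * e * f) := by simp only [mul_assoc]
    _ = e * (e * f * f) := by rw [← hcomm]
    _ = e * (e * (f * f)) := by rw [mul_assoc]
    _ = e * e * f := by rw [hf, ← mul_assoc]
    _ = e * f := by rw [he]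
  have hse : star e = e := InverseSemigroup.star_idem he
  have hsef : star (e * f) = e * f := InverseSemigroup.star_idem hef
  have le1 : ISle (e * f) e := by
    show e * (star (e * f) * (e * f)) = e * f
    rw [hsef, hef, ← mul_assoc, he]
  -- fib e is a closed star subalgebra
  have hNc : IsClosed ((𝓑.fib e : Submodule ℂ A) : Set A) := 𝓑.isClosed_fib e
  have hNmul : ∀ {x y : A}, x ∈ 𝓑.fib e → y ∈ 𝓑.fib e → x * y ∈ 𝓑.fib e := by
    intro x y hx hy; have := 𝓑.mul_mem hx hy; rwa [he] at this
  have hNstar : ∀ {x : A}, x ∈ 𝓑.fib e → star x ∈ 𝓑.fib e := by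
    intro x hx; have := 𝓑.star_mem hx; rwa [hse] at this
  -- squares of elements of fib e commute with b
  have sq : ∀ x ∈ 𝓑.fib e, x * x * b = b * (x * x) := by
    intro x hx
    have hxb : x * b ∈ 𝓑.fib e := 𝓑.incl le1 (𝓑.mul_mem hx hb)
    have hbx : b * x ∈ 𝓑.fib e := 𝓑.incl le1 (by rw [hcomm]; exact 𝓑.mul_mem hb hx)
    have q1 := h e he x (x * b) hx hxb
    have q2 := h e he x (b * x) hx hbx
    calc x * x * b = x * (x * b) := by rw [mul_assoc]
    _ = x * b * x := q1
    _ = x * (b * x) := by rw [mul_assoc]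
    _ = b * x * x := q2
    _ = b * (x * x) := by rw [mul_assoc]
  -- self-adjoint elements of fib e commute with b
  have sa_comm : ∀ x ∈ 𝓑.fib e, IsSelfAdjoint x → x * b = b * x := by
    intro x hx hxsa
    have c1 : Continuous fun t : ℝ => Real.sqrt (max t 0) :=
      Real.continuous_sqrt.comp (continuous_id.max continuous_const)
    have c2 : Continuous fun t : ℝ => Real.sqrt (max (-t) 0) :=
      Real.continuous_sqrt.comp (continuous_neg.max continuous_const)
    have hs₁m : cfcₙ (fun t : ℝ => Real.sqrt (max t 0)) x ∈ 𝓑.fib e :=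
      cfcₙ_mem_of_closed' _ hNc hNmul hNstar hx hxsa _ c1 (by simp)
    have hs₂m : cfcₙ (fun t : ℝ => Real.sqrt (max (-t) 0)) x ∈ 𝓑.fib e :=
      cfcₙ_mem_of_closed' _ hNc hNmul hNstar hx hxsa _ c2 (by simp)
    set s₁ := cfcₙ (fun t : ℝ => Real.sqrt (max t 0)) x
    set s₂ := cfcₙ (fun t : ℝ => Real.sqrt (max (-t) 0)) x
    have hdec : s₁ * s₁ - s₂ * s₂ = x := sqrt_decomp' hxsa
    calc x * b = (s₁ * s₁ - s₂ * s₂) * b := by rw [hdec]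
    _ = s₁ * s₁ * b - s₂ * s₂ * b := by rw [sub_mul]
    _ = b * (s₁ * s₁) - b * (s₂ * s₂) := by rw [sq s₁ hs₁m, sq s₂ hs₂m]
    _ = b * (s₁ * s₁ - s₂ * s₂) := by rw [mul_sub]
    _ = b * x := by rw [hdec]
  -- decompose a into self-adjoint parts
  have hstarA : star a ∈ 𝓑.fib e := hNstar ha
  have hpm : ((2:ℂ)⁻¹) • (a + star a) ∈ 𝓑.fib e :=
    Submodule.smul_mem _ _ (Submodule.add_mem _ ha hstarA)
  have kpm : (-(Complex.I) * (2:ℂ)⁻¹) • (a - star a) ∈ 𝓑.fib e :=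
    Submodule.smul_mem _ _ (Submodule.sub_mem _ ha hstarA)
  have hpsa : IsSelfAdjoint (((2:ℂ)⁻¹) • (a + star a)) := by
    rw [IsSelfAdjoint, star_smul, star_add, star_star]
    rw [show star ((2:ℂ)⁻¹) = (2:ℂ)⁻¹ by simp]
    rw [add_comm]
  have kpsa : IsSelfAdjoint ((-(Complex.I) * (2:ℂ)⁻¹) • (a - star a)) := by
    rw [IsSelfAdjoint, star_smul, star_sub, star_star]
    rw [show star (-(Complex.I) * (2:ℂ)⁻¹) = Complex.I * (2:ℂ)⁻¹ by simp]
    rw [show (star a - a) = -(a - star a) from (neg_sub a (star a)).symm, smul_neg, ← neg_smul]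
    congr 1
    ring
  have ha' : ((2:ℂ)⁻¹) • (a + star a)
      + Complex.I • ((-(Complex.I) * (2:ℂ)⁻¹) • (a - star a)) = a := by
    rw [smul_smul]
    rw [show Complex.I * (-(Complex.I) * (2:ℂ)⁻¹) = (2:ℂ)⁻¹ by
      rw [show Complex.I * (-(Complex.I) * (2:ℂ)⁻¹) = -(Complex.I * Complex.I) * (2:ℂ)⁻¹ by ring,
        Complex.I_mul_I]; ring]
    rw [← smul_add]
    rw [show (a + star a) + (a - star a) = (2:ℂ) • a by rw [two_smul]; abel]
    rw [smul_smul]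
    norm_num
  calc a * b = (((2:ℂ)⁻¹) • (a + star a)
        + Complex.I • ((-(Complex.I) * (2:ℂ)⁻¹) • (a - star a))) * b := by rw [ha']
  _ = (((2:ℂ)⁻¹) • (a + star a)) * b
        + Complex.I • (((-(Complex.I) * (2:ℂ)⁻¹) • (a - star a)) * b) := by
      simp only [add_mul, smul_mul_assoc]
  _ = b * (((2:ℂ)⁻¹) • (a + star a))
        + Complex.I • (b * ((-(Complex.I) * (2:ℂ)⁻¹) • (a - star a))) := by
      rw [sa_comm _ hpm hpsa, sa_comm _ kpm kpsa]
  _ = b * (((2:ℂ)⁻¹) • (a + star a)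
        + Complex.I • ((-(Complex.I) * (2:ℂ)⁻¹) • (a - star a))) := by
      simp only [mul_add, mul_smul_comm]
  _ = b * a := by rw [ha']
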